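/- Let k be algebraically closed of characteristic zero, n ≥ 1. A point (x_1,...,x_g) ∈ M_n(k)^g is GIT-stable for the simultaneous conjugation action of PGL_n if and only if k^n is a simple module over the free algebra k<X_1,...,X_g> via X_i ↦ x_i. -/

import Mathlib

open Matrix

noncomputable section

/-- The coordinate subspace of functions vanishing where `p` holds. -/
def coordSub (k : Type*) [Field k] {n : ℕ} (p : Fin n → Prop) :
    Submodule k (Fin n → k) where
  carrier := {v | ∀ j, p j → v j = 0}
  add_mem' := by intro a b ha hb j hj; simp [ha j hj, hb j hj]
  zero_mem' := by intro j hj; rfl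
  smul_mem' := by intro c a ha j hj; simp [ha j hj]

lemma mem_coordSub {k : Type*} [Field k] {n : ℕ} {p : Fin n → Prop}
    {v : Fin n → k} : v ∈ coordSub k p ↔ ∀ j, p j → v j = 0 := Iff.rfl

def coordEquiv (k : Type*) [Field k] {n d : ℕ} (h : d ≤ n) :
    coordSub k (fun j : Fin n => d ≤ (j : ℕ)) ≃ₗ[k] (Fin d → k) where
  toFun v i := v.1 (Fin.castLE h i)
  map_add' a b := rfl
  map_smul' c a := rfl
  invFun w := ⟨fun j => if hj : (j : ℕ) < d then w ⟨j, hj⟩ else 0, by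
    intro j hj
    simp [Nat.not_lt.mpr hj]⟩
  left_inv := by
    rintro ⟨v, hv⟩
    ext j
    by_cases hj : (j : ℕ) < d
    · simp [hj]
    · simp [hj, (hv j (Nat.not_lt.mp hj)).symm]
  right_inv := by
    intro w
    funext i
    simp

end

/-- a point `(x_1, …, x_g) ∈ M_n(k)^g` (k algebraically closed of
characteristic zero, `n ≥ 1`) is GIT-stable for the simultaneous conjugation
action of `PGL_n` — by Hilbert–Mumford, no conjugate of the tuple is
simultaneously block upper triangular with respect to a nonconstant integer
weight vector — if and only if `k^n` is a simple module over the free algebra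
`k⟨X_1, …, X_g⟩` acting via `X_i ↦ x_i`. -/
theorem stmt17 (k : Type*) [Field k] [CharZero k] [IsAlgClosed k] (n g : ℕ)
    (hn : 1 ≤ n) (x : Fin g → Matrix (Fin n) (Fin n) k) :
    (¬ ∃ (P Q : Matrix (Fin n) (Fin n) k) (r : Fin n → ℤ),
        P * Q = 1 ∧ Q * P = 1 ∧ (∃ j l : Fin n, r j ≠ r l) ∧
        ∀ (i : Fin g) (j l : Fin n), r j < r l → (Q * x i * P) j l = 0) ↔
    (∀ W : Submodule k (Fin n → k),
        (∀ i, ∀ v ∈ W, (x i).mulVec v ∈ W) → W = ⊥ ∨ W = ⊤) := by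
  constructor
  · -- stable → simple
    intro hst W hWinv
    by_contra hcon
    push_neg at hcon
    obtain ⟨hWbot, hWtop⟩ := hcon
    apply hst
    set d := Module.finrank k W with hd
    have hfrk : Module.finrank k (Fin n → k) = n := Module.finrank_fin_fun k
    have hdn : d < n := by
      have := Submodule.finrank_lt (K := k) (V := Fin n → k)
        hWtop
      omega
    have hdpos : 0 < d := by
      rcases Nat.eq_zero_or_pos d with h0 | h
      · exact absurd (Submodule.finrank_eq_zero.mp h0) hWbot
      · exact h
    set U := coordSub k (fun j : Fin n => d ≤ (j : ℕ)) with hU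
    have hUfin : Module.finrank k U = d := by
      rw [LinearEquiv.finrank_eq (coordEquiv k hdn.le), Module.finrank_fin_fun]
    obtain ⟨U', hUc⟩ := Submodule.exists_isCompl U
    obtain ⟨W', hWc⟩ := Submodule.exists_isCompl W
    have hUW : Module.finrank k U = Module.finrank k W := by rw [hUfin]
    have hU'W' : Module.finrank k U' = Module.finrank k W' := by
      have h1 := Submodule.finrank_add_eq_of_isCompl hUc
      have h2 := Submodule.finrank_add_eq_of_isCompl hWc
      omega
    obtain ⟨eU⟩ := FiniteDimensional.nonempty_linearEquiv_of_finrank_eq hUW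
    obtain ⟨eU'⟩ := FiniteDimensional.nonempty_linearEquiv_of_finrank_eq hU'W'
    set f : (Fin n → k) ≃ₗ[k] (Fin n → k) :=
      (Submodule.prodEquivOfIsCompl U U' hUc).symm ≪≫ₗ (eU.prodCongr eU') ≪≫ₗ
        (Submodule.prodEquivOfIsCompl W W' hWc) with hf
    have hfU : ∀ v ∈ U, f v ∈ W := by
      intro v hv
      have h1 : (Submodule.prodEquivOfIsCompl U U' hUc).symm v
          = ((⟨v, hv⟩ : ↥U), (0 : ↥U')) :=
        Submodule.prodEquivOfIsCompl_symm_apply_left U U' hUc (⟨v, hv⟩ : ↥U)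
      have h2 : eU' 0 = 0 := eU'.toLinearMap.map_zero
      have h3 : f v = ↑(eU ⟨v, hv⟩) + ↑(eU' 0) := by
        rw [hf]
        simp only [LinearEquiv.trans_apply, h1, LinearEquiv.prodCongr_apply]
        exact Submodule.coe_prodEquivOfIsCompl' W W' hWc _
      rw [h3, h2]
      simp
    have hfW : ∀ w ∈ W, f.symm w ∈ U := by
      intro w hw
      have h1 : (Submodule.prodEquivOfIsCompl W W' hWc).symm w
          = ((⟨w, hw⟩ : ↥W), (0 : ↥W')) :=
        Submodule.prodEquivOfIsCompl_symm_apply_left W W' hWc (⟨w, hw⟩ : ↥W)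
      have h2 : eU'.symm 0 = 0 := eU'.symm.toLinearMap.map_zero
      have h3 : f.symm w = ↑(eU.symm ⟨w, hw⟩) + ↑(eU'.symm 0) := by
        rw [hf]
        simp only [LinearEquiv.trans_symm, LinearEquiv.trans_apply, h1,
          LinearEquiv.prodCongr_symm, LinearEquiv.prodCongr_apply]
        exact Submodule.coe_prodEquivOfIsCompl' U U' hUc _
      rw [h3, h2]
      simp
    set PM := LinearMap.toMatrix' (f : (Fin n → k) →ₗ[k] (Fin n → k)) with hPM
    set QM := LinearMap.toMatrix' (f.symm : (Fin n → k) →ₗ[k] (Fin n → k))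
      with hQM
    have hPv : ∀ v, PM *ᵥ v = f v := by
      intro v
      rw [hPM, ← Matrix.toLin'_apply, Matrix.toLin'_toMatrix']
      rfl
    have hQv : ∀ v, QM *ᵥ v = f.symm v := by
      intro v
      rw [hQM, ← Matrix.toLin'_apply, Matrix.toLin'_toMatrix']
      rfl
    refine ⟨PM, QM, fun j => if (j : ℕ) < d then 1 else 0, ?_, ?_, ?_, ?_⟩
    · rw [hPM, hQM, ← LinearMap.toMatrix'_comp]
      rw [show (f : (Fin n → k) →ₗ[k] (Fin n → k)).comp
          (f.symm : (Fin n → k) →ₗ[k] (Fin n → k)) = LinearMap.id by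
        ext v; simp]
      exact LinearMap.toMatrix'_id
    · rw [hPM, hQM, ← LinearMap.toMatrix'_comp]
      rw [show (f.symm : (Fin n → k) →ₗ[k] (Fin n → k)).comp
          (f : (Fin n → k) →ₗ[k] (Fin n → k)) = LinearMap.id by
        ext v; simp]
      exact LinearMap.toMatrix'_id
    · refine ⟨⟨0, hn⟩, ⟨d, hdn⟩, ?_⟩
      simp [hdpos]
    · intro i j l hrl
      have hj : ¬ (j : ℕ) < d := by
        by_contra h
        simp only [h, if_true] at hrl
        split_ifs at hrl <;> omega
      have hl : (l : ℕ) < d := by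
        by_contra h
        simp only [hj, h, if_false] at hrl
        omega
      have key : (QM * x i * PM) j l
          = (f.symm ((x i) *ᵥ (f (Pi.single l 1)))) j := by
        have h1 : (QM * x i * PM) j l
            = ((QM * x i * PM) *ᵥ Pi.single l 1) j := by simp
        rw [h1, ← Matrix.mulVec_mulVec, ← Matrix.mulVec_mulVec, hPv, hQv]
      rw [key]
      have hsl : (Pi.single l 1 : Fin n → k) ∈ U := by
        intro j' hj'
        have hne : j' ≠ l := by
          intro h; rw [h] at hj'; omega
        exact Pi.single_eq_of_ne hne 1
      exact hfW _ (hWinv i _ (hfU _ hsl)) j (Nat.not_lt.mp hj)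
  · -- simple → stable
    intro hsimple
    rintro ⟨P, Q, r, hPQ, hQP, ⟨j0, l0, hjl⟩, htri⟩
    have hne : (Finset.univ : Finset (Fin n)).Nonempty := ⟨j0, Finset.mem_univ _⟩
    set m := Finset.univ.sup' hne r with hm
    have hle : ∀ j, r j ≤ m := fun j => Finset.le_sup' r (Finset.mem_univ j)
    obtain ⟨jm, -, hjm⟩ := Finset.exists_mem_eq_sup' hne r
    have hl1 : ∃ l1, r l1 < m := by
      rcases lt_or_gt_of_ne hjl with h | h
      · exact ⟨j0, lt_of_lt_of_le h (hle l0)⟩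
      · exact ⟨l0, lt_of_lt_of_le h (hle j0)⟩
    obtain ⟨l1, hl1⟩ := hl1
    set W' := coordSub k (fun j : Fin n => r j < m) with hW'
    set W := W'.map (Matrix.mulVecLin P) with hWdef
    have hQPv : ∀ v : Fin n → k, Q *ᵥ (P *ᵥ v) = v := by
      intro v
      rw [Matrix.mulVec_mulVec, hQP, Matrix.one_mulVec]
    have hinv : ∀ i, ∀ v ∈ W, (x i) *ᵥ v ∈ W := by
      intro i v hv
      obtain ⟨w, hw, rfl⟩ := hv
      refine ⟨(Q * x i * P) *ᵥ w, ?_, ?_⟩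
      · intro j hjlt
        show ((Q * x i * P) *ᵥ w) j = 0
        simp only [Matrix.mulVec, dotProduct]
        apply Finset.sum_eq_zero
        intro l _
        by_cases hrl : r l < m
        · rw [hw l hrl, mul_zero]
        · rw [htri i j l (lt_of_lt_of_le hjlt (le_of_not_gt hrl)), zero_mul]
      · show P *ᵥ ((Q * x i * P) *ᵥ w) = (x i) *ᵥ (P.mulVecLin w)
        simp only [Matrix.mulVecLin_apply]
        rw [Matrix.mulVec_mulVec, ← mul_assoc, ← mul_assoc, hPQ, one_mul,
          ← Matrix.mulVec_mulVec]
    rcases hsimple W hinv with hbot | htop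
    · have hmem : P *ᵥ (Pi.single jm 1) ∈ W := by
        refine ⟨Pi.single jm 1, ?_, rfl⟩
        intro j hj
        have hne' : j ≠ jm := by
          intro h; rw [h, ← hjm] at hj; exact lt_irrefl _ hj
        exact Pi.single_eq_of_ne hne' 1
      rw [hbot] at hmem
      have h0 : (Pi.single jm 1 : Fin n → k) = 0 := by
        rw [← hQPv (Pi.single jm 1), (Submodule.mem_bot k).mp hmem,
          Matrix.mulVec_zero]
      have := congrFun h0 jm
      simp at this
    · have hmem : P *ᵥ (Pi.single l1 1) ∈ W := by
        rw [htop]; trivial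
      obtain ⟨w, hw, hweq⟩ := hmem
      have hwe : w = Pi.single l1 1 := by
        have h := congrArg (fun v => Q *ᵥ v) hweq
        simp only [Matrix.mulVecLin_apply] at h
        rwa [hQPv, hQPv] at h
      have h1 := hw l1 hl1
      rw [hwe] at h1
      simp at h1
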